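/- If S is a reduced set of positive integers with |S| ≥ 3, and the skip graph G(S) contains an odd cycle in which every s ∈ S occurs as the skip size of at least one edge, then S contains at least two odd numbers. -/

import Mathlib

/-- The skip graph `G(S)`: for each `s ∈ S` and `k ∈ ℕ`, the vertices `2ks` and `(2k+1)s`
are joined by an edge. -/
def skipGraph (S : Set ℕ) : SimpleGraph ℕ where
  Adj m n := m ≠ n ∧ ∃ s ∈ S, ∃ k : ℕ,
    (m = 2 * k * s ∧ n = 2 * k * s + s) ∨ (n = 2 * k * s ∧ m = 2 * k * s + s)
  symm := by
    constructor
    rintro m n ⟨hmn, s, hs, k, h⟩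
    exact ⟨hmn.symm, s, hs, k, h.symm⟩
  loopless := by
    constructor
    rintro m ⟨hmm, -⟩
    exact hmm rfl

/-- The edge `e` has skip size `s`, i.e. its endpoints differ by `s`. -/
def EdgeSkip (s : ℕ) (e : Sym2 ℕ) : Prop := ∃ m : ℕ, e = s(m, m + s)

/-- If `S` is a reduced skip set with `|S| ≥ 3` generating an odd cycle which uses every skip
size at least once, then `S` contains at least two odd numbers. -/
theorem two_odd_skips (S : Finset ℕ) (hpos : ∀ s ∈ S, 0 < s) (hred : S.gcd id = 1)
    (hcard : 3 ≤ S.card)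
    (hcycle : ∃ (v : ℕ) (c : (skipGraph ↑S).Walk v v), c.IsCycle ∧ Odd c.length ∧
      ∀ s ∈ S, ∃ e ∈ c.edges, EdgeSkip s e) :
    ∃ s₁ ∈ S, ∃ s₂ ∈ S, s₁ ≠ s₂ ∧ Odd s₁ ∧ Odd s₂ := by
  by_contra hcon
  push_neg at hcon
  -- There is at least one odd element, else 2 divides the gcd.
  have hodd : ∃ s₀ ∈ S, Odd s₀ := by
    by_contra h
    push_neg at h
    have h2 : 2 ∣ S.gcd id := Finset.dvd_gcd fun s hs =>
      (Nat.not_odd_iff_even.mp (h s hs)).two_dvd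
    rw [hred] at h2
    omega
  obtain ⟨s₀, hs₀S, hs₀odd⟩ := hodd
  -- s₀ is the unique odd element of S.
  have huniq : ∀ s ∈ S, Odd s → s = s₀ := by
    intro s hs hso
    by_contra hne
    exact (hcon s hs s₀ hs₀S hne hso) hs₀odd
  -- Every neighbor of an odd vertex w equals w - s₀.
  have hnbr : ∀ w x : ℕ, Odd w → (skipGraph ↑S).Adj w x → x + s₀ = w := by
    rintro w x hw ⟨hne, s, hsS, k, h⟩
    rcases h with ⟨hw', hx⟩ | ⟨hx, hw'⟩
    · exfalso
      rw [hw'] at hw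
      exact (Nat.not_even_iff_odd.mpr hw) ⟨k * s, by ring⟩
    · have hsodd : Odd s := by
        have : Odd ((2 * k + 1) * s) := by rw [show (2 * k + 1) * s = 2 * k * s + s by ring]; rw [← hw']; exact hw
        exact (Nat.odd_mul.mp this).2
      have hs : s = s₀ := huniq s hsS hsodd
      subst hs
      rw [hx, hw']
  obtain ⟨v, c, hc, _hlen, huse⟩ := hcycle
  obtain ⟨e, heE, m, hm⟩ := huse s₀ hs₀S
  subst hm
  have hadj0 : (skipGraph ↑S).Adj m (m + s₀) := c.edges_subset_edgeSet heE
  -- The endpoint m + s₀ is odd.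
  have hwodd : Odd (m + s₀) := by
    obtain ⟨hne, s, hsS, k, h⟩ := hadj0
    have hspos : 0 < s := hpos s hsS
    have hs₀pos : 0 < s₀ := hpos s₀ hs₀S
    rcases h with ⟨h1, h2⟩ | ⟨h1, h2⟩
    · have hss : s = s₀ := by omega
      subst hss
      rw [h2, show 2 * k * s + s = 2 * (k * s) + 1 * s by ring]
      rcases hs₀odd with ⟨j, hj⟩
      exact ⟨k * s + j, by omega⟩
    · omega
  set w := m + s₀ with hwdef
  have hwsupp : w ∈ c.support := c.snd_mem_support_of_mem_edges heE
  -- Rotate the cycle to start at w.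
  have hc' := hc.rotate hwsupp
  set c' := c.rotate w hwsupp with hc'def
  have hnil := hc'.not_nil
  rw [SimpleGraph.Walk.not_nil_iff] at hnil
  obtain ⟨x, hadjx, q, hq⟩ := hnil
  rw [hq] at hc'
  rw [SimpleGraph.Walk.cons_isCycle_iff] at hc'
  obtain ⟨hqpath, hxe⟩ := hc'
  -- q is not nil (its endpoints differ).
  have hqnil : ¬ q.Nil := by
    intro h
    have h0 := q.getVert_zero
    have hl := q.getVert_length
    rw [SimpleGraph.Walk.nil_iff_length_eq.mp h] at hl
    exact hadjx.ne' (by rw [← h0, hl])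
  have hqrnil : ¬ q.reverse.Nil := by
    rwa [SimpleGraph.Walk.not_nil_iff_lt_length, SimpleGraph.Walk.length_reverse,
      ← SimpleGraph.Walk.not_nil_iff_lt_length]
  rw [SimpleGraph.Walk.not_nil_iff] at hqrnil
  obtain ⟨y, hadjy, q', hq'⟩ := hqrnil
  have hyE : s(w, y) ∈ q.edges := by
    have : s(w, y) ∈ q.reverse.edges := by rw [hq']; simp
    rwa [SimpleGraph.Walk.edges_reverse, List.mem_reverse] at this
  have hx : x + s₀ = w := hnbr w x hwodd hadjx
  have hy : y + s₀ = w := hnbr w y hwodd hadjy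
  have hxy : x = y := by omega
  rw [← hxy] at hyE
  exact hxe hyE
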